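/- There is an absolute constant Ξ ∈ (0, π) such that for all real θ with |θ| < Ξ, all n_0 ∈ ℕ, and all integers j ≥ n_0, the point Q_θ(ζ_j) lies in the wedge { z ∈ 𝔻 : |arg z| ≤ (1/2)·e^{−n_0} }, where Q_θ = T_{ζ_{n_0}}^{−1} ∘ (multiplication by e^{iθ}) ∘ T_{ζ_{n_0}} is the hyperbolic rotation of the disk around ζ_{n_0} by angle θ. -/

import Mathlib

noncomputable section

/-- The hyperbolic disk automorphism `T_y(z) = (z − y)/(1 − z ȳ)` taking `y` to `0`. -/
def Tmap (y z : ℂ) : ℂ := (z - y) / (1 - z * (starRingEnd ℂ) y)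

/-- The point `ζ_i = tanh(i/2)` on the positive real axis. -/
def zeta (i : ℕ) : ℂ := (Real.tanh (i / 2) : ℝ)

/-- The hyperbolic rotation of the disk around `ζ_{n₀}` by angle `θ`:
`Q_θ = T_{ζ_{n₀}}⁻¹ ∘ (z ↦ e^{iθ} z) ∘ T_{ζ_{n₀}}` (using `T_y⁻¹ = T_{−y}`). -/
def Qrot (θ : ℝ) (n₀ : ℕ) (z : ℂ) : ℂ :=
  Tmap (-(zeta n₀)) (Complex.exp ((θ : ℂ) * Complex.I) * Tmap (zeta n₀) z)

lemma aux_tanh_eq (x : ℝ) :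
    Real.tanh x = (Real.exp (2*x) - 1) / (Real.exp (2*x) + 1) := by
  have h2 : Real.exp (2*x) = Real.exp x * Real.exp x := by rw [two_mul, Real.exp_add]
  have hx := Real.exp_pos x
  rw [Real.tanh_eq_sinh_div_cosh, Real.sinh_eq, Real.cosh_eq, h2, Real.exp_neg]
  have h3 : Real.exp x + (Real.exp x)⁻¹ ≠ 0 := by positivity
  field_simp

lemma aux_arctan (y : ℝ) : |Real.arctan y| ≤ |y| := by
  have key : ∀ z : ℝ, 0 ≤ z → Real.arctan z ≤ z := by
    intro z hz
    have h0 : 0 ≤ Real.arctan z := by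
      simpa using Real.arctan_strictMono.monotone hz
    have := Real.le_tan h0 (Real.arctan_lt_pi_div_two z)
    rwa [Real.tan_arctan] at this
  rcases le_or_gt 0 y with hy | hy
  · rw [abs_of_nonneg (by simpa using Real.arctan_strictMono.monotone hy),
      abs_of_nonneg hy]
    exact key y hy
  · rw [abs_of_neg hy, abs_of_neg (by simpa using Real.arctan_strictMono hy),
      ← Real.arctan_neg]
    exact key (-y) (by linarith)

lemma aux_arg {z : ℂ} (hz : 0 < z.re) : |z.arg| ≤ |z.im| / z.re := by
  have h2 : |z.arg| < Real.pi / 2 := Complex.abs_arg_lt_pi_div_two_iff.2 (Or.inl hz)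
  obtain ⟨h2a, h2b⟩ := abs_lt.mp h2
  have h3 : z.arg = Real.arctan (z.im / z.re) := by
    rw [← Complex.tan_arg, Real.arctan_tan (by linarith) h2b]
  rw [h3]
  calc |Real.arctan (z.im / z.re)| ≤ |z.im / z.re| := aux_arctan _
    _ = |z.im| / z.re := by rw [abs_div, abs_of_pos hz]

set_option maxHeartbeats 800000 in
/-- There is an absolute constant `Ξ ∈ (0, π)` so that for all `|θ| < Ξ`, all `n₀ ∈ ℕ`
and all `j ≥ n₀`, the point `Q_θ(ζ_j)` lies in the wedge
`{z ∈ 𝔻 : |arg z| ≤ (1/2) e^{−n₀}}`. -/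
theorem stmt_10 :
    ∃ Ξ : ℝ, 0 < Ξ ∧ Ξ < Real.pi ∧
      ∀ θ : ℝ, |θ| < Ξ → ∀ n₀ j : ℕ, n₀ ≤ j →
        Qrot θ n₀ (zeta j) ∈ Metric.ball (0 : ℂ) 1 ∧
        |Complex.arg (Qrot θ n₀ (zeta j))| ≤ 1 / 2 * Real.exp (-(n₀ : ℝ)) := by
  refine ⟨1/10, by norm_num, by nlinarith [Real.pi_gt_three], ?_⟩
  intro θ hθ n₀ j hnj
  -- basic real quantities
  set u : ℝ := Real.exp (n₀ : ℝ) with hu_def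
  set v : ℝ := Real.exp (j : ℝ) with hv_def
  have hu1 : 1 ≤ u := Real.one_le_exp (by positivity)
  have hv1 : 1 ≤ v := Real.one_le_exp (by positivity)
  have huv : u ≤ v := Real.exp_le_exp.2 (by exact_mod_cast hnj)
  set a : ℝ := Real.tanh ((n₀ : ℝ) / 2) with ha_def
  set t : ℝ := Real.tanh ((j : ℝ) / 2) with ht_def
  have ha_eq : a * (u + 1) = u - 1 := by
    rw [ha_def, aux_tanh_eq]
    have : 2 * ((n₀ : ℝ) / 2) = (n₀ : ℝ) := by ring
    rw [this, ← hu_def]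
    field_simp
  have ht_eq : t * (v + 1) = v - 1 := by
    rw [ht_def, aux_tanh_eq]
    have : 2 * ((j : ℝ) / 2) = (j : ℝ) := by ring
    rw [this, ← hv_def]
    field_simp
  have hu0 : (0:ℝ) < u + 1 := by linarith
  have hv0 : (0:ℝ) < v + 1 := by linarith
  have ha0 : 0 ≤ a := by nlinarith
  have ha1 : a < 1 := by nlinarith
  have ht0 : 0 ≤ t := by nlinarith
  have ht1 : t < 1 := by nlinarith
  have hat : a ≤ t := by nlinarith
  have hta : 0 < 1 - t * a := by nlinarith
  set s : ℝ := (t - a) / (1 - t * a) with hs_def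
  have hs0 : 0 ≤ s := div_nonneg (by linarith) hta.le
  have hs1 : s < 1 := by
    rw [div_lt_one hta]; nlinarith
  -- trig quantities
  set c : ℝ := Real.cos θ with hc_def
  set si : ℝ := Real.sin θ with hsi_def
  have hθ2 : θ^2 ≤ (1/10)^2 := by
    have := abs_lt.mp hθ
    nlinarith
  have hc1 : (199:ℝ)/200 ≤ c := by
    have := Real.one_sub_sq_div_two_le_cos (x := θ)
    rw [← hc_def] at this; nlinarith
  have hsiθ : |si| ≤ 1/10 := le_trans (Real.abs_sin_le_abs) hθ.le
  have hpyth : si^2 + c^2 = 1 := Real.sin_sq_add_cos_sq θ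
  have hc0 : (0:ℝ) < c := by linarith
  -- complex quantities
  set E : ℂ := Complex.exp ((θ : ℂ) * Complex.I) with hE_def
  have hEre : E.re = c := Complex.exp_ofReal_mul_I_re θ
  have hEim : E.im = si := Complex.exp_ofReal_mul_I_im θ
  set N : ℂ := E * (s:ℂ) + (a:ℂ) with hN_def
  set D : ℂ := 1 + E * (s:ℂ) * (a:ℂ) with hD_def
  have hNre : N.re = c*s + a := by
    rw [hN_def]; simp [Complex.mul_re, hEre, hEim]
  have hNim : N.im = si*s := by
    rw [hN_def]; simp [Complex.mul_im, hEre, hEim]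
  have hDre : D.re = 1 + c*s*a := by
    rw [hD_def]; simp [Complex.mul_re, Complex.mul_im, hEre, hEim]
  have hDim : D.im = si*s*a := by
    rw [hD_def]; simp [Complex.mul_re, Complex.mul_im, hEre, hEim]
  have hzn : zeta n₀ = (a:ℂ) := by rw [ha_def]; rfl
  have hzj : zeta j = (t:ℂ) := by rw [ht_def]; rfl
  have hT : Tmap (zeta n₀) (zeta j) = (s:ℂ) := by
    rw [Tmap, hzj, hzn, Complex.conj_ofReal, hs_def]
    push_cast
    ring
  have hQ : Qrot θ n₀ (zeta j) = N / D := by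
    rw [Qrot, hT, hzn, Tmap, ← hE_def, hN_def, hD_def]
    simp only [map_neg, Complex.conj_ofReal, sub_neg_eq_add, mul_neg, sub_neg_eq_add]
  have hDre_pos : 0 < D.re := by
    rw [hDre]
    have h := mul_nonneg (mul_nonneg hc0.le hs0) ha0
    linarith
  have hD0 : D ≠ 0 := by
    intro h
    rw [h] at hDre_pos
    simp at hDre_pos
  have h1s : 0 < 1 - s^2 := by nlinarith
  have h1a : 0 < 1 - a^2 := by nlinarith
  have hlt : Complex.normSq N < Complex.normSq D := by
    rw [Complex.normSq_apply, Complex.normSq_apply, hNre, hNim, hDre, hDim]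
    have key : (1+c*s*a)^2 + (si*s*a)^2 - ((c*s+a)^2+(si*s)^2) = (1-s^2)*(1-a^2) := by
      linear_combination (s^2*a^2 - s^2) * hpyth
    linarith [mul_pos h1s h1a, key]
  have hball : Qrot θ n₀ (zeta j) ∈ Metric.ball (0 : ℂ) 1 := by
    rw [Metric.mem_ball, dist_zero_right, hQ, norm_div,
      div_lt_one (norm_pos_iff.2 hD0)]
    have h1 : ‖N‖^2 < ‖D‖^2 := by
      rw [Complex.sq_norm, Complex.sq_norm]
      exact hlt
    exact lt_of_pow_lt_pow_left₀ 2 (norm_nonneg D) h1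
  refine ⟨hball, ?_⟩
  rcases eq_or_lt_of_le hs0 with hs' | hs'
  · -- s = 0 : the point is the real number a ≥ 0
    have hQa : Qrot θ n₀ (zeta j) = (a:ℂ) := by
      rw [hQ, hN_def, hD_def, ← hs']
      simp
    rw [hQa, Complex.arg_ofReal_of_nonneg ha0]
    simp only [abs_zero]
    positivity
  · -- s > 0
    set W : ℂ := N * (starRingEnd ℂ) D with hW_def
    have hargW : (Qrot θ n₀ (zeta j)).arg = W.arg := by
      have hND : N / D = (((Complex.normSq D)⁻¹ : ℝ) : ℂ) * W := by
        rw [div_eq_mul_inv, Complex.inv_def, hW_def]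
        push_cast
        ring
      rw [hQ, hND, Complex.arg_real_mul _ (inv_pos.2 (Complex.normSq_pos.2 hD0))]
    have hWre : W.re = (c*s+a)*(1+c*s*a) + (si*s)*(si*s*a) := by
      rw [hW_def]
      simp only [Complex.mul_re, Complex.conj_re, Complex.conj_im, hNre, hNim, hDre, hDim]
      ring
    have hWim : W.im = si*s*(1 - a^2) := by
      rw [hW_def]
      simp only [Complex.mul_im, Complex.conj_re, Complex.conj_im, hNre, hNim, hDre, hDim]
      ring
    have hWre_ge : s * c ≤ W.re := by
      rw [hWre]
      have e : (c*s+a)*(1+c*s*a) + (si*s)*(si*s*a) - s*c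
          = c^2*s^2*a + a + a^2*c*s + si^2*s^2*a := by ring
      have n1 : 0 ≤ c^2*s^2*a := mul_nonneg (mul_nonneg (sq_nonneg c) (sq_nonneg s)) ha0
      have n2 : 0 ≤ a^2*c*s := mul_nonneg (mul_nonneg (sq_nonneg a) hc0.le) hs0
      have n3 : 0 ≤ si^2*s^2*a := mul_nonneg (mul_nonneg (sq_nonneg si) (sq_nonneg s)) ha0
      linarith
    have hWre_pos : 0 < W.re := lt_of_lt_of_le (by positivity) hWre_ge
    set X : ℝ := Real.exp (-(n₀:ℝ)) with hX_def
    have hX : 0 < X := Real.exp_pos _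
    have h1a2 : 1 - a^2 ≤ 4 * X := by
      have hexp : X = u⁻¹ := by rw [hX_def, Real.exp_neg, hu_def]
      have hup : (0:ℝ) < u := by linarith
      have hsqu : (a*(u+1))^2 * u = (u-1)^2 * u := by rw [ha_eq]
      have h5 : ((1-a^2)*u - 4) * (u+1)^2 = -(8*u+4) := by linear_combination -hsqu
      have goal2 : (1 - a^2) * u ≤ 4 := by
        by_contra hcon
        push_neg at hcon
        have hpos : 0 < ((1-a^2)*u - 4) * (u+1)^2 :=
          mul_pos (by linarith) (pow_pos hu0 2)
        rw [h5] at hpos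
        linarith
      rw [hexp]
      calc 1 - a^2 = ((1-a^2)*u) * u⁻¹ := by field_simp
        _ ≤ 4 * u⁻¹ := mul_le_mul_of_nonneg_right goal2 (inv_nonneg.2 hup.le)
    have h1a0 : (0:ℝ) ≤ 1 - a^2 := h1a.le
    have hbound : |W.im| ≤ (1/2 * X) * W.re := by
      rw [hWim, abs_mul, abs_mul, abs_of_nonneg hs0, abs_of_nonneg h1a0]
      have t1 : |si| * s * (1 - a^2) ≤ (1/10) * (s * (1-a^2)) := by
        have := mul_le_mul_of_nonneg_right hsiθ (mul_nonneg hs0 h1a0)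
        linarith [this]
      have t2 : s * (1 - a^2) ≤ s * (4*X) := mul_le_mul_of_nonneg_left h1a2 hs0
      have t3 : (1/10) * (s * (4*X)) ≤ (1/2*X) * W.re := by
        have t4 : (1/2*X) * (s * c) ≤ (1/2*X) * W.re :=
          mul_le_mul_of_nonneg_left hWre_ge (by positivity)
        have t5 : (0:ℝ) ≤ (s*X) * (c - 199/200) :=
          mul_nonneg (mul_nonneg hs0 hX.le) (by linarith)
        linarith [t4, t5, mul_nonneg hs0 hX.le]
      linarith
    rw [hargW]
    refine le_trans (aux_arg hWre_pos) ?_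
    rw [div_le_iff₀ hWre_pos]
    exact hbound

end
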